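/- Let N ≥ 1 and let real numbers z_0 = 1 ≤ z_1 ≤ z_2 ≤ ... ≤ z_N ≤ z_{N+1}. Define F(z_1,...,z_N) = z_1 + ∑_{k=2}^{N+1} (z_k − z_{k-1}) / (∑_{l=0}^{k-1} z_l). Suppose z_i < w < z_{i+1} for some 0 ≤ i ≤ N. Then the corresponding (N+1)-variable objective obtained by inserting w between z_i and z_{i+1} is strictly smaller than F(z_1,...,z_N). -/

import Mathlib

open Finset

/-- Inserting an extra relay strictly between two consecutive nodes strictly
decreases the attenuation objective
`F z = z 1 + ∑_{k=2}^{M+1} (z k − z (k-1)) / (∑_{l<k} z l)` (with `z 0 = 1`). -/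
theorem stmt7 (N : ℕ) (hN : 1 ≤ N) (z : ℕ → ℝ) (hz0 : z 0 = 1)
    (hmono : ∀ k, k ≤ N → z k ≤ z (k + 1))
    (i : ℕ) (hi : i ≤ N) (w : ℝ) (hw1 : z i < w) (hw2 : w < z (i + 1))
    (z' : ℕ → ℝ)
    (hz' : ∀ k, z' k = if k ≤ i then z k else if k = i + 1 then w else z (k - 1)) :
    z' 1 + ∑ k ∈ Finset.Icc 2 (N + 2),
        (z' k - z' (k - 1)) / (∑ l ∈ Finset.range k, z' l)
      < z 1 + ∑ k ∈ Finset.Icc 2 (N + 1),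
        (z k - z (k - 1)) / (∑ l ∈ Finset.range k, z l) := by
  -- monotonicity of z on [0, N+1]
  have hmono' : ∀ a b : ℕ, a ≤ b → b ≤ N + 1 → z a ≤ z b := by
    intro a b hab hb
    induction hab with
    | refl => exact le_refl _
    | @step m h ih =>
        exact le_trans (ih (by omega)) (hmono m (by omega))
  have h1 : ∀ l, l ≤ N + 1 → (1 : ℝ) ≤ z l := by
    intro l hl
    calc (1:ℝ) = z 0 := hz0.symm
    _ ≤ z l := hmono' 0 l (Nat.zero_le _) hl
  have hznn : ∀ l, l ≤ N + 1 → (0 : ℝ) ≤ z l := fun l hl =>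
    le_trans zero_le_one (h1 l hl)
  have hSpos : ∀ k, 1 ≤ k → k ≤ N + 2 → 0 < ∑ l ∈ Finset.range k, z l := by
    intro k hk1 hk2
    have h0 : z 0 ≤ ∑ l ∈ Finset.range k, z l :=
      Finset.single_le_sum (f := z)
        (fun l hl => hznn l (by simp only [Finset.mem_range] at hl; omega))
        (Finset.mem_range.mpr (by omega))
    rw [hz0] at h0; linarith
  have hwpos : (0 : ℝ) < w := lt_of_lt_of_le (lt_of_lt_of_le one_pos (h1 i (by omega))) hw1.le
  -- values of z'
  have hz'le : ∀ k, k ≤ i → z' k = z k := by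
    intro k hk; rw [hz', if_pos hk]
  have hz'i1 : z' (i + 1) = w := by
    rw [hz', if_neg (by omega), if_pos rfl]
  have hz'ge : ∀ k, i + 2 ≤ k → z' k = z (k - 1) := by
    intro k hk; rw [hz', if_neg (by omega), if_neg (by omega)]
  -- partial sums
  have hS'1 : ∀ k, k ≤ i + 1 →
      ∑ l ∈ Finset.range k, z' l = ∑ l ∈ Finset.range k, z l := by
    intro k hk
    refine Finset.sum_congr rfl fun l hl => ?_
    exact hz'le l (by simp only [Finset.mem_range] at hl; omega)
  have hS'2 : ∀ k, i + 2 ≤ k →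
      ∑ l ∈ Finset.range k, z' l = (∑ l ∈ Finset.range (k - 1), z l) + w := by
    intro k hk
    induction k, hk using Nat.le_induction with
    | base =>
        rw [Finset.sum_range_succ, hS'1 (i+1) le_rfl, hz'i1]
        simp
    | succ n hn ih =>
        rw [Finset.sum_range_succ, ih, hz'ge n hn]
        have hn1 : n - 1 + 1 = n := by omega
        have : ∑ l ∈ Finset.range n, z l
            = (∑ l ∈ Finset.range (n-1), z l) + z (n-1) := by
          conv_lhs => rw [← hn1]
          rw [Finset.sum_range_succ]
        rw [Nat.add_sub_cancel, this]
        ring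
  -- rewrite both sides with the uniform formula
  have key : ∀ (M : ℕ) (y : ℕ → ℝ), y 0 = 1 →
      y 1 + ∑ k ∈ Finset.Icc 2 (M+1),
          (y k - y (k-1)) / (∑ l ∈ Finset.range k, y l)
      = 1 + ∑ k ∈ Finset.Icc 1 (M+1),
          (y k - y (k-1)) / (∑ l ∈ Finset.range k, y l) := by
    intro M y hy0
    have hins : Finset.Icc 1 (M+1) = insert 1 (Finset.Icc 2 (M+1)) := by
      ext x; simp; omega
    rw [hins, Finset.sum_insert (by simp)]
    rw [Finset.sum_range_one, hy0, div_one]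
    ring
  have hz'0 : z' 0 = 1 := by rw [hz'le 0 (Nat.zero_le _), hz0]
  have hN2 : N + 2 = (N + 1) + 1 := rfl
  rw [hN2, key (N+1) z' hz'0, key N z hz0]
  have hIoc : ∀ m : ℕ, Finset.Icc 1 m = Finset.Ioc 0 m := fun m => Finset.Icc_add_one_left_eq_Ioc 0 m
  rw [hIoc, hIoc]
  -- abbreviate the summands
  set f : ℕ → ℝ := fun k => (z k - z (k-1)) / (∑ l ∈ Finset.range k, z l) with hf
  set f' : ℕ → ℝ := fun k => (z' k - z' (k-1)) / (∑ l ∈ Finset.range k, z' l) with hf'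
  -- split the new sum
  have hmid' : ∑ k ∈ Finset.Ioc i (i+2), f' k = f' (i+1) + f' (i+2) := by
    rw [Finset.sum_Ioc_succ_top (by omega : i ≤ i+1),
        Finset.sum_Ioc_succ_top (le_refl i), Finset.Ioc_self, Finset.sum_empty]
    ring
  have split' : ∑ k ∈ Finset.Ioc 0 (N+1+1), f' k
      = (∑ k ∈ Finset.Ioc 0 i, f' k) + (f' (i+1) + f' (i+2))
        + ∑ k ∈ Finset.Ioc (i+2) (N+1+1), f' k := by
    rw [← Finset.sum_Ioc_consecutive f' (Nat.zero_le i) (by omega : i ≤ N+1+1),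
        ← Finset.sum_Ioc_consecutive f' (by omega : i ≤ i+2) (by omega : i+2 ≤ N+1+1),
        hmid']
    ring
  have hmid'' : ∑ k ∈ Finset.Ioc i (i+1), f k = f (i+1) := by
    rw [Finset.sum_Ioc_succ_top (le_refl i), Finset.Ioc_self, Finset.sum_empty]
    ring
  have split : ∑ k ∈ Finset.Ioc 0 (N+1), f k
      = (∑ k ∈ Finset.Ioc 0 i, f k) + f (i+1)
        + ∑ k ∈ Finset.Ioc (i+1) (N+1), f k := by
    rw [← Finset.sum_Ioc_consecutive f (Nat.zero_le i) (by omega : i ≤ N+1),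
        ← Finset.sum_Ioc_consecutive f (by omega : i ≤ i+1) (by omega : i+1 ≤ N+1),
        hmid'']
    ring
  rw [split', split]
  -- the common head
  have hhead : ∑ k ∈ Finset.Ioc 0 i, f' k = ∑ k ∈ Finset.Ioc 0 i, f k := by
    refine Finset.sum_congr rfl fun k hk => ?_
    simp only [Finset.mem_Ioc] at hk
    simp only [hf, hf']
    rw [hz'le k hk.2, hz'le (k-1) (by omega), hS'1 k (by omega)]
  -- the middle: strict inequality
  have hmid : f' (i+1) + f' (i+2) < f (i+1) := by
    have hTpos : 0 < ∑ l ∈ Finset.range (i+1), z l := hSpos (i+1) (by omega) (by omega)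
    set T : ℝ := ∑ l ∈ Finset.range (i+1), z l with hT
    have e1 : f' (i+1) = (w - z i) / T := by
      simp only [hf']
      rw [hz'i1, Nat.add_sub_cancel, hz'le i le_rfl, hS'1 (i+1) le_rfl]
    have e2 : f' (i+2) = (z (i+1) - w) / (T + w) := by
      simp only [hf']
      rw [hz'ge (i+2) le_rfl, hS'2 (i+2) le_rfl]
      norm_num [hz'i1]
      rfl
    have e3 : f (i+1) = (z (i+1) - z i) / T := by
      simp only [hf]; rw [Nat.add_sub_cancel]
    rw [e1, e2, e3]
    have hlt : (z (i+1) - w) / (T + w) < (z (i+1) - w) / T := by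
      apply div_lt_div_of_pos_left (by linarith) hTpos (by linarith)
    have : (w - z i) / T + (z (i+1) - w) / T = (z (i+1) - z i) / T := by
      field_simp
      ring
    linarith
  -- the tail
  have htail : ∑ k ∈ Finset.Ioc (i+2) (N+1+1), f' k
      ≤ ∑ k ∈ Finset.Ioc (i+1) (N+1), f k := by
    have hmap : Finset.Ioc (i+2) (N+1+1)
        = (Finset.Ioc (i+1) (N+1)).map (addRightEmbedding 1) := by
      rw [Finset.map_add_right_Ioc]
    rw [hmap, Finset.sum_map]
    refine Finset.sum_le_sum fun k hk => ?_
    simp only [Finset.mem_Ioc] at hk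
    simp only [addRightEmbedding_apply]
    simp only [hf, hf', Nat.add_sub_cancel]
    rw [hz'ge (k+1) (by omega), hz'ge k (by omega), hS'2 (k+1) (by omega)]
    simp only [Nat.add_sub_cancel]
    have hnum : 0 ≤ z k - z (k-1) := by
      have := hmono' (k-1) k (by omega) (by omega)
      linarith
    have hSk : 0 < ∑ l ∈ Finset.range k, z l := hSpos k (by omega) (by omega)
    exact div_le_div_of_nonneg_left hnum hSk (by linarith)
  linarith
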